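/- For every term t and proposition A of the binding-logic language L and every variable x, the pre-cooking of the capture-avoiding substitution satisfies ((t/x)A)' ≡ (t'/x)A' modulo the congruence generated by σ. -/

import Mathlib

/- ## Binding logic: syntax and sequent calculus -/

/-- A binding-logic language: function and predicate symbols with binding arities. -/
structure BSig where
  Fn : Type
  Pr : Type
  /-- binding arity of a function symbol -/
  far : Fn → List ℕ
  /-- binding arity of a predicate symbol -/
  par : Pr → List ℕ

/-- Terms of binding logic (α-equivalence classes, in locally nameless / de Bruijn style):
`bvar i` is a variable bound by a binder of a function symbol or by a quantifier,
`fvar x` is a named free variable.  In `app f a`, the `i`-th argument `a i` is a term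
in which `(S.far f).get i` additional variables (de Bruijn indices `0, …, kᵢ - 1`) are bound. -/
inductive Tm (S : BSig) : Type
  | bvar : ℕ → Tm S
  | fvar : ℕ → Tm S
  | app : (f : S.Fn) → (Fin (S.far f).length → Tm S) → Tm S

variable {S : BSig}

/-- `Tm.WF p t`: all de Bruijn variables of `t` are bound among the `p` ambient binders;
a *term of the language* (over named free variables) at binder depth `p`. -/
def Tm.WF : ℕ → Tm S → Prop
  | p, .bvar i => i < p
  | _, .fvar _ => True
  | p, .app f a => ∀ i, Tm.WF (p + (S.far f).get i) (a i)

/-- Capture-avoiding substitution of the term `u` for the free variable `x`. -/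
def Tm.subst (x : ℕ) (u : Tm S) : Tm S → Tm S
  | .bvar i => .bvar i
  | .fvar y => if y = x then u else .fvar y
  | .app f a => .app f (fun i => Tm.subst x u (a i))

/-- Instantiation of the bound variable `k` by the (locally closed) term `u`. -/
def Tm.openT (u : Tm S) : ℕ → Tm S → Tm S
  | k, .bvar i => if i = k then u else .bvar i
  | _, .fvar y => .fvar y
  | k, .app f a => .app f (fun i => Tm.openT u (k + (S.far f).get i) (a i))

/-- Free (named) variables of a term. -/
def Tm.fv : Tm S → Set ℕ
  | .bvar _ => ∅
  | .fvar x => {x}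
  | .app _ a => ⋃ i, (a i).fv

/-- Propositions of binding logic.  In `atom P a`, the `i`-th argument binds
`(S.par P).get i` variables; quantifiers bind one de Bruijn variable. -/
inductive Fm (S : BSig) : Type
  | atom : (P : S.Pr) → (Fin (S.par P).length → Tm S) → Fm S
  | imp : Fm S → Fm S → Fm S
  | conj : Fm S → Fm S → Fm S
  | disj : Fm S → Fm S → Fm S
  | bot : Fm S
  | all : Fm S → Fm S
  | ex : Fm S → Fm S

/-- `Fm.WF q A`: well-formedness of `A` under `q` ambient quantifiers. -/
def Fm.WF : ℕ → Fm S → Prop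
  | q, .atom P a => ∀ i, Tm.WF (q + (S.par P).get i) (a i)
  | q, .imp A B => Fm.WF q A ∧ Fm.WF q B
  | q, .conj A B => Fm.WF q A ∧ Fm.WF q B
  | q, .disj A B => Fm.WF q A ∧ Fm.WF q B
  | _, .bot => True
  | q, .all A => Fm.WF (q + 1) A
  | q, .ex A => Fm.WF (q + 1) A

/-- Free (named) variables of a proposition. -/
def Fm.fv : Fm S → Set ℕ
  | .atom _ a => ⋃ i, (a i).fv
  | .imp A B => A.fv ∪ B.fv
  | .conj A B => A.fv ∪ B.fv
  | .disj A B => A.fv ∪ B.fv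
  | .bot => ∅
  | .all A => A.fv
  | .ex A => A.fv

/-- Instantiation of the quantifier-bound variable `k` of a proposition by a term. -/
def Fm.openF (u : Tm S) : ℕ → Fm S → Fm S
  | k, .atom P a => .atom P (fun i => Tm.openT u (k + (S.par P).get i) (a i))
  | k, .imp A B => .imp (Fm.openF u k A) (Fm.openF u k B)
  | k, .conj A B => .conj (Fm.openF u k A) (Fm.openF u k B)
  | k, .disj A B => .disj (Fm.openF u k A) (Fm.openF u k B)
  | _, .bot => .bot
  | k, .all A => .all (Fm.openF u (k + 1) A)
  | k, .ex A => .ex (Fm.openF u (k + 1) A)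

/-- Capture-avoiding substitution of a term for a free variable in a proposition. -/
def Fm.subst (x : ℕ) (u : Tm S) : Fm S → Fm S
  | .atom P a => .atom P (fun i => Tm.subst x u (a i))
  | .imp A B => .imp (Fm.subst x u A) (Fm.subst x u B)
  | .conj A B => .conj (Fm.subst x u A) (Fm.subst x u B)
  | .disj A B => .disj (Fm.subst x u A) (Fm.subst x u B)
  | .bot => .bot
  | .all A => .all (Fm.subst x u A)
  | .ex A => .ex (Fm.subst x u A)

/-- Free variables of a multiset of propositions. -/
def mFv (Γ : Multiset (Fm S)) : Set ℕ := {x | ∃ A ∈ Γ, x ∈ A.fv}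

/-- The sequent calculus of binding logic: exactly the standard rules of classical
sequent calculus, with capture-avoiding substitution in the quantifier rules. -/
inductive Deriv (S : BSig) : Multiset (Fm S) → Multiset (Fm S) → Prop
  | ax (A : Fm S) : Deriv S {A} {A}
  | cut {Γ Δ : Multiset (Fm S)} {A : Fm S} :
      Deriv S (A ::ₘ Γ) Δ → Deriv S Γ (A ::ₘ Δ) → Deriv S Γ Δ
  | contrL {Γ Δ} {A : Fm S} : Deriv S (A ::ₘ A ::ₘ Γ) Δ → Deriv S (A ::ₘ Γ) Δ
  | contrR {Γ Δ} {A : Fm S} : Deriv S Γ (A ::ₘ A ::ₘ Δ) → Deriv S Γ (A ::ₘ Δ)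
  | weakL {Γ Δ} {A : Fm S} : Deriv S Γ Δ → Deriv S (A ::ₘ Γ) Δ
  | weakR {Γ Δ} {A : Fm S} : Deriv S Γ Δ → Deriv S Γ (A ::ₘ Δ)
  | impL {Γ Δ} {A B : Fm S} :
      Deriv S Γ (A ::ₘ Δ) → Deriv S (B ::ₘ Γ) Δ → Deriv S ((Fm.imp A B) ::ₘ Γ) Δ
  | impR {Γ Δ} {A B : Fm S} :
      Deriv S (A ::ₘ Γ) (B ::ₘ Δ) → Deriv S Γ ((Fm.imp A B) ::ₘ Δ)
  | conjL {Γ Δ} {A B : Fm S} :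
      Deriv S (A ::ₘ B ::ₘ Γ) Δ → Deriv S ((Fm.conj A B) ::ₘ Γ) Δ
  | conjR {Γ Δ} {A B : Fm S} :
      Deriv S Γ (A ::ₘ Δ) → Deriv S Γ (B ::ₘ Δ) → Deriv S Γ ((Fm.conj A B) ::ₘ Δ)
  | disjL {Γ Δ} {A B : Fm S} :
      Deriv S (A ::ₘ Γ) Δ → Deriv S (B ::ₘ Γ) Δ → Deriv S ((Fm.disj A B) ::ₘ Γ) Δ
  | disjR {Γ Δ} {A B : Fm S} :
      Deriv S Γ (A ::ₘ B ::ₘ Δ) → Deriv S Γ ((Fm.disj A B) ::ₘ Δ)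
  | botL {Γ Δ} : Deriv S ((Fm.bot) ::ₘ Γ) Δ
  | allL {Γ Δ} {A : Fm S} {t : Tm S} : Tm.WF 0 t →
      Deriv S ((Fm.openF t 0 A) ::ₘ Γ) Δ → Deriv S ((Fm.all A) ::ₘ Γ) Δ
  | allR {Γ Δ} {A : Fm S} {x : ℕ} :
      x ∉ mFv Γ → x ∉ mFv Δ → x ∉ A.fv →
      Deriv S Γ ((Fm.openF (Tm.fvar x) 0 A) ::ₘ Δ) → Deriv S Γ ((Fm.all A) ::ₘ Δ)
  | exL {Γ Δ} {A : Fm S} {x : ℕ} :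
      x ∉ mFv Γ → x ∉ mFv Δ → x ∉ A.fv →
      Deriv S ((Fm.openF (Tm.fvar x) 0 A) ::ₘ Γ) Δ → Deriv S ((Fm.ex A) ::ₘ Γ) Δ
  | exR {Γ Δ} {A : Fm S} {t : Tm S} : Tm.WF 0 t →
      Deriv S Γ ((Fm.openF t 0 A) ::ₘ Δ) → Deriv S Γ ((Fm.ex A) ::ₘ Δ)
/- ## The translated language L' : explicit substitutions and de Bruijn indices -/

/-- Sorts of `L'`: `tm n` for terms in a context of `n` bound variables, and
`sb n p` for explicit substitutions mapping `p` variables to terms of sort `n`. -/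
inductive Srt : Type
  | tm : ℕ → Srt
  | sb : ℕ → ℕ → Srt
deriving DecidableEq

/-- Terms of `L'`.  `evar x s` is a named variable of sort `s`; `qvar i` is a
(formula-level) de Bruijn variable bound by a quantifier; `idx i n` is the de Bruijn
constant `iₙ` (`1 ≤ i ≤ n`); `fa f p a` is `fₚ(a)`; `sub t s` is `t[s]`;
`eid n`, `cons`, `up n`, `comp` are `idₙ`, cons `.`, `↑ₙ` and composition `∘`. -/
inductive ETm (S : BSig) : Type
  | evar : ℕ → Srt → ETm S
  | qvar : ℕ → ETm S
  | idx : ℕ → ℕ → ETm S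
  | fa : (f : S.Fn) → ℕ → (Fin (S.far f).length → ETm S) → ETm S
  | sub : ETm S → ETm S → ETm S
  | eid : ℕ → ETm S
  | cons : ETm S → ETm S → ETm S
  | up : ℕ → ETm S
  | comp : ETm S → ETm S → ETm S

variable {S : BSig}

/-- The iterated shift `↑^k` out of context `p`:
`↑_p ∘ (↑_{p+1} ∘ ⋯ ∘ ↑_{p+k-1})`, of sort `⟨p+k, p⟩` (`id_p` for `k = 0`). -/
def upChain (S : BSig) (p : ℕ) : ℕ → ETm S
  | 0 => .eid p
  | 1 => .up p
  | k + 2 => .comp (.up p) (upChain S (p + 1) (k + 1))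

/-- Sorting judgment for `L'`; `Θ` gives the sorts of the quantifier-bound variables. -/
inductive HasSort : List Srt → ETm S → Srt → Prop
  | evar {Θ x s} : HasSort Θ (.evar x s) s
  | qvar {Θ i s} : Θ[i]? = some s → HasSort Θ (.qvar i) s
  | idx {Θ i n} : 1 ≤ i → i ≤ n → HasSort Θ (.idx i n) (.tm n)
  | fa {Θ} {f : S.Fn} {p : ℕ} {a : Fin (S.far f).length → ETm S} :
      (∀ j, HasSort Θ (a j) (.tm (p + (S.far f).get j))) →
      HasSort Θ (.fa f p a) (.tm p)
  | sub {Θ t s n p} : HasSort Θ t (.tm p) → HasSort Θ s (.sb n p) →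
      HasSort Θ (.sub t s) (.tm n)
  | eid {Θ n} : HasSort Θ (.eid n) (.sb n n)
  | cons {Θ t s n p} : HasSort Θ t (.tm n) → HasSort Θ s (.sb n p) →
      HasSort Θ (.cons t s) (.sb n (p + 1))
  | up {Θ n} : HasSort Θ (.up n) (.sb (n + 1) n)
  | comp {Θ s₁ s₂ n p q} : HasSort Θ s₁ (.sb p n) → HasSort Θ s₂ (.sb q p) →
      HasSort Θ (.comp s₁ s₂) (.sb q n)

/-- The component `1[↑^j]` (of sort `q+k`, with `1` of sort `q+k-j`). -/
def shiftOne (S : BSig) (q k j : ℕ) : ETm S :=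
  if j = 0 then .idx 1 (q + k) else .sub (.idx 1 (q + k - j)) (upChain S (q + k - j) j)

/-- Auxiliary: builds `1[↑^j]. … .1[↑^{k-1}].(s ∘ ↑^k)`. -/
def liftAux (S : BSig) (q k : ℕ) (s : ETm S) : ℕ → ℕ → ETm S
  | 0, _ => .comp s (upChain S q k)
  | m + 1, j => .cons (shiftOne S q k j) (liftAux S q k s m (j + 1))

/-- The substitution `1.1[↑].….1[↑^{k−1}].(s ∘ ↑^k)` of sort `⟨q+k, p+k⟩`,
for `s` of sort `⟨q,p⟩` (just `s` when `k = 0`). -/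
def liftSub (S : BSig) (q k : ℕ) (s : ETm S) : ETm S :=
  match k with
  | 0 => s
  | k' + 1 => liftAux S q (k' + 1) s (k' + 1) 0

/-- One step of `σ`-rewriting (at the root or in any subterm). -/
inductive Rw : ETm S → ETm S → Prop
  -- the rule n+1 → 1[↑ⁿ]
  | ridx {i n : ℕ} : 1 ≤ i → i + 1 ≤ n →
      Rw (.idx (i + 1) n) (.sub (.idx 1 (n - i)) (upChain S (n - i) i))
  -- 1[t.s] → t
  | rhead {m : ℕ} {t s : ETm S} : Rw (.sub (.idx 1 m) (.cons t s)) t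
  -- t[id] → t
  | rtid {n : ℕ} {t : ETm S} : Rw (.sub t (.eid n)) t
  -- (t[s])[s'] → t[s ∘ s']
  | rclos {t s s' : ETm S} : Rw (.sub (.sub t s) s') (.sub t (.comp s s'))
  -- id ∘ s → s
  | ridl {n : ℕ} {s : ETm S} : Rw (.comp (.eid n) s) s
  -- ↑ ∘ (t.s) → s
  | rshcons {n : ℕ} {t s : ETm S} : Rw (.comp (.up n) (.cons t s)) s
  -- (s₁ ∘ s₂) ∘ s₃ → s₁ ∘ (s₂ ∘ s₃)
  | rassoc {s₁ s₂ s₃ : ETm S} : Rw (.comp (.comp s₁ s₂) s₃) (.comp s₁ (.comp s₂ s₃))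
  -- (t.s) ∘ s' → t[s'].(s ∘ s')
  | rmap {t s s' : ETm S} : Rw (.comp (.cons t s) s') (.cons (.sub t s') (.comp s s'))
  -- s ∘ id → s
  | ridr {n : ℕ} {s : ETm S} : Rw (.comp s (.eid n)) s
  -- 1.↑ → id
  | rvarsh {n : ℕ} : Rw (.cons (.idx 1 (n + 1)) (.up n)) (.eid (n + 1))
  -- 1[s].(↑ ∘ s) → s
  | rscons {m n : ℕ} {s : ETm S} : Rw (.cons (.sub (.idx 1 m) s) (.comp (.up n) s)) s
  -- fₚ(t₁,…,tₙ)[s] → f_q(t₁[1.1[↑].….1[↑^{k₁−1}].s∘↑^{k₁}], …) for s of sort ⟨q,p⟩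
  | rfa {f : S.Fn} {p q : ℕ} {a : Fin (S.far f).length → ETm S} {s : ETm S} :
      (∃ Θ, HasSort Θ s (.sb q p)) →
      Rw (.sub (.fa f p a) s)
         (.fa f q (fun i => .sub (a i) (liftSub S q ((S.far f).get i) s)))
  -- congruence: rewriting in subterms
  | cfa {f : S.Fn} {p : ℕ} {a : Fin (S.far f).length → ETm S}
      {i : Fin (S.far f).length} {t' : ETm S} :
      Rw (a i) t' → Rw (.fa f p a) (.fa f p (Function.update a i t'))
  | csub₁ {t t' s : ETm S} : Rw t t' → Rw (.sub t s) (.sub t' s)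
  | csub₂ {t s s' : ETm S} : Rw s s' → Rw (.sub t s) (.sub t s')
  | ccons₁ {t t' s : ETm S} : Rw t t' → Rw (.cons t s) (.cons t' s)
  | ccons₂ {t s s' : ETm S} : Rw s s' → Rw (.cons t s) (.cons t s')
  | ccomp₁ {t t' s : ETm S} : Rw t t' → Rw (.comp t s) (.comp t' s)
  | ccomp₂ {t s s' : ETm S} : Rw s s' → Rw (.comp t s) (.comp t s')

/-- The congruence `≡` on terms of `L'` generated by the rewrite system `σ`. -/
def TmConv (S : BSig) : ETm S → ETm S → Prop := Relation.EqvGen Rw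

/-- A term is `σ`-normal if no rewrite step applies to it. -/
def ENormal (t : ETm S) : Prop := ∀ u, ¬ Rw t u

/-- Propositions of `L'` (quantifiers bind one variable of the indicated sort,
represented by formula-level de Bruijn indices `qvar`). -/
inductive EFm (S : BSig) : Type
  | atom : (P : S.Pr) → (Fin (S.par P).length → ETm S) → EFm S
  | imp : EFm S → EFm S → EFm S
  | conj : EFm S → EFm S → EFm S
  | disj : EFm S → EFm S → EFm S
  | bot : EFm S
  | all : Srt → EFm S → EFm S
  | ex : Srt → EFm S → EFm S

/-- Replacement of the quantifier-bound variable `k` by a term (in a term of `L'`). -/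
def ETm.openE (u : ETm S) (k : ℕ) : ETm S → ETm S
  | .qvar i => if i = k then u else .qvar i
  | .evar x s => .evar x s
  | .idx i n => .idx i n
  | .fa f p a => .fa f p (fun j => ETm.openE u k (a j))
  | .sub t s => .sub (ETm.openE u k t) (ETm.openE u k s)
  | .eid n => .eid n
  | .cons t s => .cons (ETm.openE u k t) (ETm.openE u k s)
  | .up n => .up n
  | .comp t s => .comp (ETm.openE u k t) (ETm.openE u k s)

/-- Instantiation of the quantifier-bound variable `k` of a proposition of `L'`. -/
def EFm.openF (u : ETm S) : ℕ → EFm S → EFm S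
  | k, .atom P a => .atom P (fun i => ETm.openE u k (a i))
  | k, .imp A B => .imp (EFm.openF u k A) (EFm.openF u k B)
  | k, .conj A B => .conj (EFm.openF u k A) (EFm.openF u k B)
  | k, .disj A B => .disj (EFm.openF u k A) (EFm.openF u k B)
  | _, .bot => .bot
  | k, .all s A => .all s (EFm.openF u (k + 1) A)
  | k, .ex s A => .ex s (EFm.openF u (k + 1) A)

/-- Names of the free named variables of a term of `L'`. -/
def ETm.fvs : ETm S → Set ℕ
  | .evar x _ => {x}
  | .qvar _ => ∅
  | .idx _ _ => ∅
  | .fa _ _ a => ⋃ i, (a i).fvs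
  | .sub t s => t.fvs ∪ s.fvs
  | .eid _ => ∅
  | .cons t s => t.fvs ∪ s.fvs
  | .up _ => ∅
  | .comp t s => t.fvs ∪ s.fvs

/-- Names of the free named variables of a proposition of `L'`. -/
def EFm.fvs : EFm S → Set ℕ
  | .atom _ a => ⋃ i, (a i).fvs
  | .imp A B => A.fvs ∪ B.fvs
  | .conj A B => A.fvs ∪ B.fvs
  | .disj A B => A.fvs ∪ B.fvs
  | .bot => ∅
  | .all _ A => A.fvs
  | .ex _ A => A.fvs

/-- Free variables of a multiset of `L'`-propositions. -/
def mFvE (Γ : Multiset (EFm S)) : Set ℕ := {x | ∃ A ∈ Γ, x ∈ A.fvs}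

/-- The congruence on propositions of `L'` generated by `σ`
(congruent atoms have `≡`-congruent arguments). -/
inductive FConv : EFm S → EFm S → Prop
  | atom {P : S.Pr} {a b : Fin (S.par P).length → ETm S} :
      (∀ i, TmConv S (a i) (b i)) → FConv (.atom P a) (.atom P b)
  | imp {A A' B B'} : FConv A A' → FConv B B' → FConv (.imp A B) (.imp A' B')
  | conj {A A' B B'} : FConv A A' → FConv B B' → FConv (.conj A B) (.conj A' B')
  | disj {A A' B B'} : FConv A A' → FConv B B' → FConv (.disj A B) (.disj A' B')
  | bot : FConv .bot .bot
  | all {s A A'} : FConv A A' → FConv (.all s A) (.all s A')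
  | ex {s A A'} : FConv A A' → FConv (.ex s A) (.ex s A')

/-- Sequent calculus modulo a congruence `E`, with proof length recorded:
the standard classical rules, where principal formulas need only be congruent
to the displayed shape.  `DerivM E n Γ Δ` : `Γ ⊢ Δ` has a proof of length `n`. -/
inductive DerivM (E : EFm S → EFm S → Prop) : ℕ → Multiset (EFm S) → Multiset (EFm S) → Prop
  | ax {A B : EFm S} : E A B → DerivM E 1 {A} {B}
  | cut {m n Γ Δ} {A B : EFm S} : E A B →
      DerivM E m (A ::ₘ Γ) Δ → DerivM E n Γ (B ::ₘ Δ) → DerivM E (m + n + 1) Γ Δ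
  | contrL {m Γ Δ} {A B₁ B₂ : EFm S} : E A B₁ → E A B₂ →
      DerivM E m (B₁ ::ₘ B₂ ::ₘ Γ) Δ → DerivM E (m + 1) (A ::ₘ Γ) Δ
  | contrR {m Γ Δ} {A B₁ B₂ : EFm S} : E A B₁ → E A B₂ →
      DerivM E m Γ (B₁ ::ₘ B₂ ::ₘ Δ) → DerivM E (m + 1) Γ (A ::ₘ Δ)
  | weakL {m Γ Δ} {A : EFm S} : DerivM E m Γ Δ → DerivM E (m + 1) (A ::ₘ Γ) Δ
  | weakR {m Γ Δ} {A : EFm S} : DerivM E m Γ Δ → DerivM E (m + 1) Γ (A ::ₘ Δ)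
  | impL {m n Γ Δ} {C A B : EFm S} : E C (.imp A B) →
      DerivM E m Γ (A ::ₘ Δ) → DerivM E n (B ::ₘ Γ) Δ → DerivM E (m + n + 1) (C ::ₘ Γ) Δ
  | impR {m Γ Δ} {C A B : EFm S} : E C (.imp A B) →
      DerivM E m (A ::ₘ Γ) (B ::ₘ Δ) → DerivM E (m + 1) Γ (C ::ₘ Δ)
  | conjL {m Γ Δ} {C A B : EFm S} : E C (.conj A B) →
      DerivM E m (A ::ₘ B ::ₘ Γ) Δ → DerivM E (m + 1) (C ::ₘ Γ) Δ
  | conjR {m n Γ Δ} {C A B : EFm S} : E C (.conj A B) →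
      DerivM E m Γ (A ::ₘ Δ) → DerivM E n Γ (B ::ₘ Δ) → DerivM E (m + n + 1) Γ (C ::ₘ Δ)
  | disjL {m n Γ Δ} {C A B : EFm S} : E C (.disj A B) →
      DerivM E m (A ::ₘ Γ) Δ → DerivM E n (B ::ₘ Γ) Δ → DerivM E (m + n + 1) (C ::ₘ Γ) Δ
  | disjR {m Γ Δ} {C A B : EFm S} : E C (.disj A B) →
      DerivM E m Γ (A ::ₘ B ::ₘ Δ) → DerivM E (m + 1) Γ (C ::ₘ Δ)
  | botL {Γ Δ} {A : EFm S} : E A .bot → DerivM E 1 (A ::ₘ Γ) Δ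
  | allL {m Γ Δ} {B C A : EFm S} {s : Srt} {t : ETm S} :
      E B (.all s A) → E C (EFm.openF t 0 A) → HasSort [] t s →
      DerivM E m (C ::ₘ Γ) Δ → DerivM E (m + 1) (B ::ₘ Γ) Δ
  | allR {m Γ Δ} {B A : EFm S} {s : Srt} {x : ℕ} :
      E B (.all s A) → x ∉ mFvE Γ → x ∉ mFvE Δ → x ∉ A.fvs →
      DerivM E m Γ ((EFm.openF (.evar x s) 0 A) ::ₘ Δ) → DerivM E (m + 1) Γ (B ::ₘ Δ)
  | exL {m Γ Δ} {B A : EFm S} {s : Srt} {x : ℕ} :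
      E B (.ex s A) → x ∉ mFvE Γ → x ∉ mFvE Δ → x ∉ A.fvs →
      DerivM E m ((EFm.openF (.evar x s) 0 A) ::ₘ Γ) Δ → DerivM E (m + 1) (B ::ₘ Γ) Δ
  | exR {m Γ Δ} {B C A : EFm S} {s : Srt} {t : ETm S} :
      E B (.ex s A) → E C (EFm.openF t 0 A) → HasSort [] t s →
      DerivM E m Γ (C ::ₘ Δ) → DerivM E (m + 1) Γ (B ::ₘ Δ)

/-- Provability in sequent calculus modulo the congruence `E`. -/
def DerivMod (E : EFm S → EFm S → Prop) (Γ Δ : Multiset (EFm S)) : Prop :=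
  ∃ n, DerivM E n Γ Δ

/- ## Pre-cooking : the translation from L to L' -/

/-- Pre-cooking of a term at binder depth `p` (the length of the list `l` of
bound variables): binder-bound variables become de Bruijn constants, other
variables are protected by the shift `↑^p`. -/
def Ft (S : BSig) : (p : ℕ) → Tm S → ETm S
  | p, .bvar i =>
      if i < p then .idx (i + 1) p
      else if p = 0 then .qvar (i - p) else .sub (.qvar (i - p)) (upChain S 0 p)
  | p, .fvar x =>
      if p = 0 then .evar x (.tm 0) else .sub (.evar x (.tm 0)) (upChain S 0 p)
  | p, .app f a => .fa f p (fun i => Ft S (p + (S.far f).get i) (a i))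

/-- Pre-cooking of a proposition: `A' = F(A, ε)`. -/
def Ff (S : BSig) : Fm S → EFm S
  | .atom P a => .atom P (fun i => Ft S ((S.par P).get i) (a i))
  | .imp A B => .imp (Ff S A) (Ff S B)
  | .conj A B => .conj (Ff S A) (Ff S B)
  | .disj A B => .disj (Ff S A) (Ff S B)
  | .bot => .bot
  | .all A => .all (.tm 0) (Ff S A)
  | .ex A => .ex (.tm 0) (Ff S A)

/-- Grafting `⟨v/x⟩t` in `L'`: textual replacement of the (sort-0) variable `x` by `v`. -/
def ETm.graft (x : ℕ) (v : ETm S) : ETm S → ETm S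
  | .evar y s => if y = x ∧ s = .tm 0 then v else .evar y s
  | .qvar i => .qvar i
  | .idx i n => .idx i n
  | .fa f p a => .fa f p (fun j => ETm.graft x v (a j))
  | .sub t s => .sub (ETm.graft x v t) (ETm.graft x v s)
  | .eid n => .eid n
  | .cons t s => .cons (ETm.graft x v t) (ETm.graft x v s)
  | .up n => .up n
  | .comp t s => .comp (ETm.graft x v t) (ETm.graft x v s)

/-- Substitution `(v/x)A` of a (quantifier-closed) term for a variable in a
proposition of `L'` (capture-avoiding, since terms of `L'` have no binders). -/
def EFm.graft (x : ℕ) (v : ETm S) : EFm S → EFm S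
  | .atom P a => .atom P (fun i => ETm.graft x v (a i))
  | .imp A B => .imp (EFm.graft x v A) (EFm.graft x v B)
  | .conj A B => .conj (EFm.graft x v A) (EFm.graft x v B)
  | .disj A B => .disj (EFm.graft x v A) (EFm.graft x v B)
  | .bot => .bot
  | .all s A => .all s (EFm.graft x v A)
  | .ex s A => .ex s (EFm.graft x v A)

/- ## F-terms and F-propositions -/

/-- All named variables occurring in the term have sort `0`. -/
def ETm.vars0 : ETm S → Prop
  | .evar _ s => s = .tm 0
  | .qvar _ => True
  | .idx _ _ => True
  | .fa _ _ a => ∀ i, (a i).vars0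
  | .sub t s => t.vars0 ∧ s.vars0
  | .eid _ => True
  | .cons t s => t.vars0 ∧ s.vars0
  | .up _ => True
  | .comp t s => t.vars0 ∧ s.vars0

/-- All named variables of the proposition have sort `0`, and all its
quantifiers bind variables of sort `0`. -/
def EFm.vars0F : EFm S → Prop
  | .atom _ a => ∀ i, (a i).vars0
  | .imp A B => A.vars0F ∧ B.vars0F
  | .conj A B => A.vars0F ∧ B.vars0F
  | .disj A B => A.vars0F ∧ B.vars0F
  | .bot => True
  | .all s A => s = .tm 0 ∧ A.vars0F
  | .ex s A => s = .tm 0 ∧ A.vars0F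

/-- The proposition is `σ`-normal: every term occurring in it is `σ`-normal. -/
def EFm.TmsNormal : EFm S → Prop
  | .atom _ a => ∀ i, ENormal (a i)
  | .imp A B => A.TmsNormal ∧ B.TmsNormal
  | .conj A B => A.TmsNormal ∧ B.TmsNormal
  | .disj A B => A.TmsNormal ∧ B.TmsNormal
  | .bot => True
  | .all _ A => A.TmsNormal
  | .ex _ A => A.TmsNormal

/-- Well-sortedness of a proposition of `L'` in a context `Θ` of quantified sorts. -/
def EFmSorted : List Srt → EFm S → Prop
  | Θ, .atom P a => ∀ i, HasSort Θ (a i) (.tm ((S.par P).get i))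
  | Θ, .imp A B => EFmSorted Θ A ∧ EFmSorted Θ B
  | Θ, .conj A B => EFmSorted Θ A ∧ EFmSorted Θ B
  | Θ, .disj A B => EFmSorted Θ A ∧ EFmSorted Θ B
  | _, .bot => True
  | Θ, .all s A => EFmSorted (s :: Θ) A
  | Θ, .ex s A => EFmSorted (s :: Θ) A

/-- An F-proposition: a `σ`-normal, well-sorted proposition of `L'` containing
only variables of sort `0`. -/
def FProp (A : EFm S) : Prop := A.TmsNormal ∧ A.vars0F ∧ EFmSorted [] A

/-- An F-term of sort `0`: a `σ`-normal, well-sorted term of sort `0` of `L'`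
containing only variables of sort `0`. -/
def FTerm0 (t : ETm S) : Prop := ENormal t ∧ t.vars0 ∧ HasSort [] t (.tm 0)

/- ## Auxiliary lemmas for the substitution/pre-cooking proposition -/

section Aux

variable {S : BSig}

lemma tc_refl (t : ETm S) : TmConv S t t := Relation.EqvGen.refl t
lemma tc_symm {a b : ETm S} : TmConv S a b → TmConv S b a := Relation.EqvGen.symm a b
lemma tc_trans {a b c : ETm S} : TmConv S a b → TmConv S b c → TmConv S a c :=
  Relation.EqvGen.trans a b c
lemma tc_rw {a b : ETm S} (h : Rw a b) : TmConv S a b := Relation.EqvGen.rel a b h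

lemma tc_congr {F : ETm S → ETm S} (hF : ∀ a b, Rw a b → Rw (F a) (F b))
    {x y : ETm S} (h : TmConv S x y) : TmConv S (F x) (F y) := by
  induction h with
  | rel a b r => exact Relation.EqvGen.rel _ _ (hF _ _ r)
  | refl a => exact Relation.EqvGen.refl _
  | symm a b _ ih => exact Relation.EqvGen.symm _ _ ih
  | trans a b c _ _ ih1 ih2 => exact Relation.EqvGen.trans _ _ _ ih1 ih2

lemma tc_sub₁ {x y s : ETm S} (h : TmConv S x y) : TmConv S (.sub x s) (.sub y s) :=
  tc_congr (fun _ _ r => Rw.csub₁ r) h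
lemma tc_sub₂ {x y t : ETm S} (h : TmConv S x y) : TmConv S (.sub t x) (.sub t y) :=
  tc_congr (fun _ _ r => Rw.csub₂ r) h
lemma tc_comp₁ {x y s : ETm S} (h : TmConv S x y) : TmConv S (.comp x s) (.comp y s) :=
  tc_congr (fun _ _ r => Rw.ccomp₁ r) h
lemma tc_comp₂ {x y t : ETm S} (h : TmConv S x y) : TmConv S (.comp t x) (.comp t y) :=
  tc_congr (fun _ _ r => Rw.ccomp₂ r) h

/-- Congruence of `≡` for a single argument of a function symbol. -/
lemma conv_fa_update {f : S.Fn} {p : ℕ} {c c' : ETm S} (h : TmConv S c c') :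
    ∀ (a : Fin (S.far f).length → ETm S) (i : Fin (S.far f).length), a i = c →
      TmConv S (.fa f p a) (.fa f p (Function.update a i c')) := by
  induction h with
  | rel c c' r =>
      intro a i hi
      exact tc_rw (Rw.cfa (i := i) (hi ▸ r))
  | refl c =>
      intro a i hi
      have : Function.update a i c = a := by subst hi; exact Function.update_eq_self i a
      rw [this]; exact tc_refl _
  | symm c c' _ ih =>
      intro a i hi
      have h1 := ih (Function.update a i c) i (by simp)
      have h2 : Function.update (Function.update a i c) i c' = a := by
        subst hi; simp
      rw [h2] at h1
      exact tc_symm h1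
  | trans c d e _ _ ih1 ih2 =>
      intro a i hi
      have h1 := ih1 a i hi
      have h2 := ih2 (Function.update a i d) i (by simp)
      have h3 : Function.update (Function.update a i d) i e = Function.update a i e := by simp
      rw [h3] at h2
      exact tc_trans h1 h2

/-- Congruence of `≡` for function symbols (all arguments at once). -/
lemma conv_fa {f : S.Fn} {p : ℕ} {a b : Fin (S.far f).length → ETm S}
    (h : ∀ i, TmConv S (a i) (b i)) : TmConv S (.fa f p a) (.fa f p b) := by
  have key : ∀ l : List (Fin (S.far f).length),
      TmConv S (.fa f p a) (.fa f p (fun i => if i ∈ l then b i else a i)) := by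
    intro l
    induction l with
    | nil => simpa using tc_refl (.fa f p a)
    | cons j l ih =>
        have hj : TmConv S ((fun i => if i ∈ l then b i else a i) j) (b j) := by
          by_cases hjl : j ∈ l <;> simp [hjl] <;> [exact tc_refl _; exact h j]
        have step := conv_fa_update (p := p) hj (fun i => if i ∈ l then b i else a i) j rfl
        have heq : Function.update (fun i => if i ∈ l then b i else a i) j (b j)
            = fun i => if i ∈ j :: l then b i else a i := by
          funext i
          by_cases hij : i = j
          · subst hij; simp
          · simp [Function.update, hij]
        rw [heq] at step
        exact tc_trans ih step
  have := key (List.finRange (S.far f).length)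
  simpa [List.mem_finRange] using this

lemma upChain_eq_comp (m : ℕ) : ∀ i, 1 ≤ i →
    upChain S m (i + 1) = .comp (.up m) (upChain S (m + 1) i)
  | _ + 1, _ => rfl

lemma upChain_sort (Θ : List Srt) : ∀ (i m : ℕ), HasSort Θ (upChain S m i) (.sb (m + i) m) := by
  intro i
  induction i with
  | zero => intro m; exact HasSort.eid
  | succ i ih =>
      intro m
      match i with
      | 0 => exact HasSort.up
      | Nat.succ i' =>
          have h2 := ih (m + 1)
          have e : m + 1 + (i' + 1) = m + (i' + 1 + 1) := by omega
          rw [e] at h2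
          exact HasSort.comp HasSort.up h2

lemma upChain_split : ∀ (a b m : ℕ),
    TmConv S (upChain S m (a + b)) (.comp (upChain S m a) (upChain S (m + a) b)) := by
  intro a
  induction a with
  | zero =>
      intro b m
      simpa [upChain] using tc_symm (tc_rw (Rw.ridl (n := m) (s := upChain S m b)))
  | succ a ih =>
      intro b m
      match a with
      | 0 =>
          match b with
          | 0 => exact tc_symm (tc_rw (Rw.ridr (n := m + 1) (s := .up m)))
          | Nat.succ b' =>
              have e : 1 + (b' + 1) = (b' + 1) + 1 := by omega
              rw [e, upChain_eq_comp m (b' + 1) (by omega)]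
              have e2 : m + 1 = m + 1 := rfl
              exact tc_refl _
      | Nat.succ a' =>
          -- a + 1 = a' + 2, so a + 1 + b ≥ 2
          have e1 : (a' + 1 + 1) + b = (a' + 1 + b) + 1 := by omega
          rw [e1, upChain_eq_comp m (a' + 1 + b) (by omega)]
          have ihm := ih b (m + 1)
          have step1 : TmConv S (.comp (.up m) (upChain S (m + 1) (a' + 1 + b)))
              (.comp (.up m) (.comp (upChain S (m + 1) (a' + 1)) (upChain S (m + 1 + (a' + 1)) b))) :=
            tc_comp₂ ihm
          have e3 : m + 1 + (a' + 1) = m + (a' + 1 + 1) := by omega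
          rw [e3] at step1
          have step2 : TmConv S
              (.comp (.comp (.up m) (upChain S (m + 1) (a' + 1))) (upChain S (m + (a' + 1 + 1)) b))
              (.comp (.up m) (.comp (upChain S (m + 1) (a' + 1)) (upChain S (m + (a' + 1 + 1)) b))) :=
            tc_rw Rw.rassoc
          rw [← upChain_eq_comp m (a' + 1) (by omega)] at step2
          exact tc_trans step1 (tc_symm step2)

/-- The action of a shift on a de Bruijn constant:
`(a)[↑^j] ≡ a + j`  (stated with `a = b+1`, `q = b+c+1` to keep `1 ≤ a ≤ q`). -/
lemma idx_shift : ∀ (j b c : ℕ),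
    TmConv S (.idx (b + 1 + j) (b + c + 1 + j)) (.sub (.idx (b + 1) (b + c + 1)) (upChain S (b + c + 1) j)) := by
  intro j b c
  match j with
  | 0 => exact tc_symm (tc_rw (Rw.rtid (n := b + c + 1) (t := .idx (b + 1) (b + c + 1))))
  | Nat.succ j' =>
      match b with
      | 0 =>
          -- a = 1 : one ridx step
          have h := Rw.ridx (S := S) (i := j' + 1) (n := c + 1 + (j' + 1)) (by omega) (by omega)
          have e : c + 1 + (j' + 1) - (j' + 1) = c + 1 := by omega
          rw [e] at h
          simp only [Nat.zero_add]
          rw [show 1 + (j' + 1) = j' + 1 + 1 from by omega]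
          exact tc_rw h
      | Nat.succ b' =>
          -- a = b' + 2
          -- LHS: idx (b'+2+j) (b'+c+2+j) → 1[↑_{c+1}^{b'+1+j}]
          have hL := Rw.ridx (S := S) (i := b' + 1 + (j' + 1)) (n := b' + 1 + c + 1 + (j' + 1))
            (by omega) (by omega)
          have eL : b' + 1 + c + 1 + (j' + 1) - (b' + 1 + (j' + 1)) = c + 1 := by omega
          rw [eL] at hL
          have eL2 : b' + 1 + (j' + 1) + 1 = b' + 1 + 1 + (j' + 1) := by omega
          rw [eL2] at hL
          -- RHS: idx (b'+2) (b'+c+2) → 1[↑_{c+1}^{b'+1}]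
          have hR := Rw.ridx (S := S) (i := b' + 1) (n := b' + 1 + c + 1) (by omega) (by omega)
          have eR : b' + 1 + c + 1 - (b' + 1) = c + 1 := by omega
          rw [eR] at hR
          -- chain on RHS
          have step1 : TmConv S (.sub (.idx (b' + 1 + 1) (b' + 1 + c + 1)) (upChain S (b' + 1 + c + 1) (j' + 1)))
              (.sub (.sub (.idx 1 (c + 1)) (upChain S (c + 1) (b' + 1))) (upChain S (b' + 1 + c + 1) (j' + 1))) :=
            tc_sub₁ (tc_rw hR)
          have step2 : TmConv S
              (.sub (.sub (.idx 1 (c + 1)) (upChain S (c + 1) (b' + 1))) (upChain S (b' + 1 + c + 1) (j' + 1)))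
              (.sub (.idx 1 (c + 1)) (.comp (upChain S (c + 1) (b' + 1)) (upChain S (b' + 1 + c + 1) (j' + 1)))) :=
            tc_rw Rw.rclos
          have split := upChain_split (S := S) (b' + 1) (j' + 1) (c + 1)
          have e4 : c + 1 + (b' + 1) = b' + 1 + c + 1 := by omega
          rw [e4] at split
          have step3 : TmConv S
              (.sub (.idx 1 (c + 1)) (.comp (upChain S (c + 1) (b' + 1)) (upChain S (b' + 1 + c + 1) (j' + 1))))
              (.sub (.idx 1 (c + 1)) (upChain S (c + 1) (b' + 1 + (j' + 1)))) :=
            tc_sub₂ (tc_symm split)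
          exact tc_trans (tc_rw hL) (tc_symm (tc_trans step1 (tc_trans step2 step3)))

/-- `σ`-normal-form-free peeling : `↑^i ∘ (cons-chain)` drops `i` cons layers. -/
lemma peel (q j : ℕ) (s : ETm S) :
    ∀ (i r l m : ℕ), TmConv S (.comp (upChain S m i) (liftAux S q j s (i + r) l))
      (liftAux S q j s r (l + i)) := by
  intro i
  induction i with
  | zero =>
      intro r l m
      simpa [upChain] using tc_rw (Rw.ridl (n := m) (s := liftAux S q j s r l))
  | succ i ih =>
      intro r l m
      match i with
      | 0 =>
          have e : 1 + r = r + 1 := by omega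
          rw [e]
          show TmConv S (.comp (.up m) (.cons (shiftOne S q j l) (liftAux S q j s r (l + 1)))) _
          exact tc_rw Rw.rshcons
      | Nat.succ i' =>
          have e1 : i' + 1 + 1 + r = (i' + 1) + (r + 1) := by omega
          rw [e1, upChain_eq_comp m (i' + 1) (by omega)]
          have step1 : TmConv S
              (.comp (.comp (.up m) (upChain S (m + 1) (i' + 1))) (liftAux S q j s ((i' + 1) + (r + 1)) l))
              (.comp (.up m) (.comp (upChain S (m + 1) (i' + 1)) (liftAux S q j s ((i' + 1) + (r + 1)) l))) :=
            tc_rw Rw.rassoc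
          have ihh := ih (r + 1) l (m + 1)
          have step2 : TmConv S
              (.comp (.up m) (.comp (upChain S (m + 1) (i' + 1)) (liftAux S q j s ((i' + 1) + (r + 1)) l)))
              (.comp (.up m) (liftAux S q j s (r + 1) (l + (i' + 1)))) :=
            tc_comp₂ ihh
          have step3 : TmConv S
              (.comp (.up m) (.cons (shiftOne S q j (l + (i' + 1))) (liftAux S q j s r (l + (i' + 1) + 1))))
              (liftAux S q j s r (l + (i' + 1) + 1)) :=
            tc_rw Rw.rshcons
          have e2 : l + (i' + 1) + 1 = l + (i' + 1 + 1) := by omega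
          rw [e2] at step3
          exact tc_trans step1 (tc_trans step2 step3)

lemma liftAux_sort {Θ : List Srt} {q k : ℕ} {s : ETm S} (j : ℕ) (hs : HasSort Θ s (.sb q k))
    (hj : 1 ≤ j) : ∀ (m l : ℕ), m + l = j → HasSort Θ (liftAux S q j s m l) (.sb (q + j) (k + m)) := by
  intro m
  induction m with
  | zero =>
      intro l _
      exact HasSort.comp hs (upChain_sort Θ j q)
  | succ m ih =>
      intro l hml
      have hso : HasSort Θ (shiftOne S q j l) (.tm (q + j)) := by
        unfold shiftOne
        by_cases hl : l = 0
        · simp only [hl, if_pos rfl]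
          exact HasSort.idx (by omega) (by omega)
        · rw [if_neg hl]
          have e : q + j - l + l = q + j := by omega
          have hu := upChain_sort (S := S) Θ l (q + j - l)
          rw [e] at hu
          exact HasSort.sub (HasSort.idx (by omega) (by omega)) hu
      exact HasSort.cons hso (ih (l + 1) (by omega))

/-- The invariant carried through the term induction: `s` is a substitution of
sort `⟨p+k, k⟩` that acts as the identity on `1,…,k` (up to reindexing) and as
the shift `↑^p` beyond. -/
def Good (p k : ℕ) (s : ETm S) : Prop :=
  (∃ Θ, HasSort Θ s (.sb (p + k) k)) ∧
  (∀ b, b + 1 ≤ k → TmConv S (.sub (.idx (b + 1) k) s) (.idx (b + 1) (p + k))) ∧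
  TmConv S (.comp (upChain S 0 k) s) (upChain S 0 (p + k))

lemma Good_lift {p k : ℕ} {s : ETm S} (hG : Good p k s) :
    ∀ j, Good (S := S) p (k + j) (liftSub S (p + k) j s) := by
  intro j
  match j with
  | 0 => exact hG
  | Nat.succ j' =>
      set q := p + k with hq
      set j := j' + 1 with hj
      have hj1 : 1 ≤ j := by omega
      -- the top chain and its "i-th suffix"
      have hLdef : liftSub S q j s = liftAux S q j s j 0 := rfl
      -- peel all j layers: ↑_k^j ∘ L ≡ s ∘ ↑_q^j
      have peelAll : ∀ m : ℕ, TmConv S (.comp (upChain S m j) (liftAux S q j s j 0))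
          (.comp s (upChain S q j)) := by
        intro m
        have h := peel (S := S) q j s j 0 0 m
        exact h
      refine ⟨?_, ?_, ?_⟩
      · -- sorting
        obtain ⟨Θ, hs⟩ := hG.1
        refine ⟨Θ, ?_⟩
        have h := liftAux_sort (S := S) (Θ := Θ) (q := q) (k := k) (s := s) j hs hj1 j 0 (by omega)
        have e : q + j = p + (k + j) := by omega
        rw [e] at h
        exact h
      · -- action on de Bruijn constants
        intro b hb
        by_cases hbj : b = 0
        · subst hbj
          have hhead : Rw (S := S) (.sub (.idx 1 (k + j)) (liftAux S q j s j 0)) (shiftOne S q j 0) := by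
            show Rw (.sub (.idx 1 (k + j)) (.cons (shiftOne S q j 0) (liftAux S q j s j' 1))) _
            exact Rw.rhead
          have e : shiftOne S q j 0 = .idx 1 (q + j) := by unfold shiftOne; simp
          rw [e] at hhead
          have e2 : q + j = p + (k + j) := by omega
          rw [e2] at hhead
          exact tc_rw hhead
        · by_cases hlt : b + 1 ≤ j
          · -- 1 ≤ b < j : both sides reduce to 1[↑_{·}^{b}] at matching sorts
            have hb1 : 1 ≤ b := by omega
            -- LHS first step
            have h1 := Rw.ridx (S := S) (i := b) (n := k + j) (by omega) (by omega)
            have e1 : k + j - b = k + (j - b) := by omega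
            rw [e1] at h1
            have step1 : TmConv S (.sub (.idx (b + 1) (k + j)) (liftSub S q j s))
                (.sub (.sub (.idx 1 (k + (j - b))) (upChain S (k + (j - b)) b)) (liftAux S q j s j 0)) :=
              tc_sub₁ (tc_rw h1)
            have step2 : TmConv S
                (.sub (.sub (.idx 1 (k + (j - b))) (upChain S (k + (j - b)) b)) (liftAux S q j s j 0))
                (.sub (.idx 1 (k + (j - b))) (.comp (upChain S (k + (j - b)) b) (liftAux S q j s j 0))) :=
              tc_rw Rw.rclos
            have hpeel := peel (S := S) q j s b (j - b) 0 (k + (j - b))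
            have e2 : b + (j - b) = j := by omega
            rw [e2] at hpeel
            have e3 : (0 : ℕ) + b = b := by omega
            rw [e3] at hpeel
            have step3 : TmConv S
                (.sub (.idx 1 (k + (j - b))) (.comp (upChain S (k + (j - b)) b) (liftAux S q j s j 0)))
                (.sub (.idx 1 (k + (j - b))) (liftAux S q j s (j - b) b)) :=
              tc_sub₂ hpeel
            -- expose the head cons of the suffix
            have e4 : j - b = (j - b - 1) + 1 := by omega
            have step4 : TmConv S (.sub (.idx 1 (k + (j - b))) (liftAux S q j s (j - b) b))
                (shiftOne S q j b) := by
              rw [e4]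
              exact tc_rw Rw.rhead
            have e5 : shiftOne S q j b = .sub (.idx 1 (q + j - b)) (upChain S (q + j - b) b) := by
              unfold shiftOne; rw [if_neg (by omega)]
            -- RHS step
            have h2 := Rw.ridx (S := S) (i := b) (n := p + (k + j)) (by omega) (by omega)
            have e6 : p + (k + j) - b = q + j - b := by omega
            rw [e6] at h2
            exact tc_trans step1 (tc_trans step2 (tc_trans step3
              (tc_trans step4 (e5 ▸ tc_symm (tc_rw h2)))))
          · -- j ≤ b < k + j : use idx_shift on both sides and Good on s
            have hc : b + 1 ≤ k + j := hb
            set c := b - j with hcdef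
            have hck : c + 1 ≤ k := by omega
            -- LHS : idx (b+1) (k+j) ≡ (idx (c+1) k)[↑_k^j]
            have hL := idx_shift (S := S) j c (k - c - 1)
            have eL1 : c + (k - c - 1) + 1 = k := by omega
            have eL2 : c + 1 + j = b + 1 := by omega
            rw [eL1, eL2] at hL
            have step1 : TmConv S (.sub (.idx (b + 1) (k + j)) (liftSub S q j s))
                (.sub (.sub (.idx (c + 1) k) (upChain S k j)) (liftAux S q j s j 0)) :=
              tc_sub₁ hL
            have step2 : TmConv S
                (.sub (.sub (.idx (c + 1) k) (upChain S k j)) (liftAux S q j s j 0))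
                (.sub (.idx (c + 1) k) (.comp (upChain S k j) (liftAux S q j s j 0))) :=
              tc_rw Rw.rclos
            have step3 : TmConv S
                (.sub (.idx (c + 1) k) (.comp (upChain S k j) (liftAux S q j s j 0)))
                (.sub (.idx (c + 1) k) (.comp s (upChain S q j))) :=
              tc_sub₂ (peelAll k)
            have step4 : TmConv S (.sub (.sub (.idx (c + 1) k) s) (upChain S q j))
                (.sub (.idx (c + 1) k) (.comp s (upChain S q j))) :=
              tc_rw Rw.rclos
            have step5 : TmConv S (.sub (.sub (.idx (c + 1) k) s) (upChain S q j))
                (.sub (.idx (c + 1) q) (upChain S q j)) :=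
              tc_sub₁ (hG.2.1 c hck)
            -- RHS : idx (b+1) (p+(k+j)) ≡ (idx (c+1) q)[↑_q^j]
            have hR := idx_shift (S := S) j c (q - c - 1)
            have eR1 : c + (q - c - 1) + 1 = q := by omega
            rw [eR1] at hR
            have eR2 : c + 1 + j = b + 1 := by omega
            have eR3 : q + j = p + (k + j) := by omega
            rw [eR2, eR3] at hR
            exact tc_trans step1 (tc_trans step2 (tc_trans step3
              (tc_trans (tc_symm step4) (tc_trans step5 (tc_symm hR)))))
      · -- composition with the full shift
        have split1 := upChain_split (S := S) k j 0
        have e1 : (0 : ℕ) + k = k := by omega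
        rw [e1] at split1
        have step1 : TmConv S (.comp (upChain S 0 (k + j)) (liftSub S q j s))
            (.comp (.comp (upChain S 0 k) (upChain S k j)) (liftAux S q j s j 0)) :=
          tc_comp₁ split1
        have step2 : TmConv S
            (.comp (.comp (upChain S 0 k) (upChain S k j)) (liftAux S q j s j 0))
            (.comp (upChain S 0 k) (.comp (upChain S k j) (liftAux S q j s j 0))) :=
          tc_rw Rw.rassoc
        have step3 : TmConv S
            (.comp (upChain S 0 k) (.comp (upChain S k j) (liftAux S q j s j 0)))
            (.comp (upChain S 0 k) (.comp s (upChain S q j))) :=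
          tc_comp₂ (peelAll k)
        have step4 : TmConv S (.comp (.comp (upChain S 0 k) s) (upChain S q j))
            (.comp (upChain S 0 k) (.comp s (upChain S q j))) :=
          tc_rw Rw.rassoc
        have step5 : TmConv S (.comp (.comp (upChain S 0 k) s) (upChain S q j))
            (.comp (upChain S 0 q) (upChain S q j)) :=
          tc_comp₁ hG.2.2
        have split2 := upChain_split (S := S) q j 0
        have e2 : (0 : ℕ) + q = q := by omega
        rw [e2] at split2
        have e3 : q + j = p + (k + j) := by omega
        rw [e3] at split2
        exact tc_trans step1 (tc_trans step2 (tc_trans step3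
          (tc_trans (tc_symm step4) (tc_trans step5 (tc_symm split2)))))

/-- Key lemma: pre-cooking at depth `p+k` versus pre-cooking at depth `k`
followed by a `Good` substitution. -/
lemma keyG (p : ℕ) (t : Tm S) : ∀ (k : ℕ) (s : ETm S), Tm.WF k t → Good p k s →
    TmConv S (.sub (Ft S k t) s) (Ft S (p + k) t) := by
  induction t with
  | bvar i =>
      intro k s hwf hG
      have hik : i < k := hwf
      have e1 : Ft S k (.bvar i) = .idx (i + 1) k := by simp [Ft, hik]
      have e2 : Ft S (p + k) (.bvar i) = .idx (i + 1) (p + k) := by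
        simp [Ft, show i < p + k by omega]
      rw [e1, e2]
      exact hG.2.1 i hik
  | fvar x =>
      intro k s hwf hG
      match k with
      | 0 =>
          have hs : TmConv S s (upChain S 0 p) := by
            have h := hG.2.2
            exact tc_trans (tc_symm (tc_rw (Rw.ridl (n := 0) (s := s)))) h
          have step : TmConv S (.sub (.evar x (.tm 0)) s) (.sub (.evar x (.tm 0)) (upChain S 0 p)) :=
            tc_sub₂ hs
          match p with
          | 0 =>
              have : TmConv S (.sub (.evar x (.tm 0)) (upChain S 0 0)) (.evar x (.tm 0)) :=
                tc_rw Rw.rtid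
              simpa [Ft] using tc_trans step this
          | Nat.succ p' =>
              simpa [Ft] using step
      | Nat.succ k' =>
          have e1 : Ft S (k' + 1) (.fvar x)
              = .sub (.evar x (.tm 0)) (upChain S 0 (k' + 1)) := by simp [Ft]
          have e2 : Ft S (p + (k' + 1)) (.fvar x)
              = .sub (.evar x (.tm 0)) (upChain S 0 (p + (k' + 1))) := by
            simp [Ft, show p + (k' + 1) ≠ 0 by omega]
          rw [e1, e2]
          have step1 : TmConv S (.sub (.sub (.evar x (.tm 0)) (upChain S 0 (k' + 1))) s)
              (.sub (.evar x (.tm 0)) (.comp (upChain S 0 (k' + 1)) s)) :=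
            tc_rw Rw.rclos
          exact tc_trans step1 (tc_sub₂ hG.2.2)
  | app f a ih =>
      intro k s hwf hG
      have hsort : ∃ Θ, HasSort Θ s (.sb (p + k) k) := hG.1
      have hrfa : Rw (S := S)
          (.sub (.fa f k (fun i => Ft S (k + (S.far f).get i) (a i))) s)
          (.fa f (p + k) (fun i => .sub (Ft S (k + (S.far f).get i) (a i))
            (liftSub S (p + k) ((S.far f).get i) s))) :=
        Rw.rfa hsort
      have hcomp : ∀ i, TmConv S
          (.sub (Ft S (k + (S.far f).get i) (a i)) (liftSub S (p + k) ((S.far f).get i) s))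
          (Ft S (p + k + (S.far f).get i) (a i)) := by
        intro i
        have h := ih i (k + (S.far f).get i) (liftSub S (p + k) ((S.far f).get i) s)
          (hwf i) (Good_lift hG ((S.far f).get i))
        have e : p + (k + (S.far f).get i) = p + k + (S.far f).get i := by omega
        rw [e] at h
        exact h
      have step2 : TmConv S
          (.fa f (p + k) (fun i => .sub (Ft S (k + (S.far f).get i) (a i))
            (liftSub S (p + k) ((S.far f).get i) s)))
          (.fa f (p + k) (fun i => Ft S (p + k + (S.far f).get i) (a i))) :=
        conv_fa hcomp
      show TmConv S (.sub (.fa f k (fun i => Ft S (k + (S.far f).get i) (a i))) s)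
          (.fa f (p + k) (fun i => Ft S (p + k + (S.far f).get i) (a i)))
      exact tc_trans (tc_rw hrfa) step2

lemma graft_upChain (x : ℕ) (v : ETm S) : ∀ (i m : ℕ), ETm.graft x v (upChain S m i) = upChain S m i := by
  intro i
  induction i with
  | zero => intro m; rfl
  | succ i ih =>
      intro m
      match i with
      | 0 => rfl
      | Nat.succ i' =>
          show ETm.graft x v (.comp (.up m) (upChain S (m + 1) (i' + 1)))
              = .comp (.up m) (upChain S (m + 1) (i' + 1))
          simp [ETm.graft, ih (m + 1)]

lemma Good_base (p : ℕ) : Good (S := S) p 0 (upChain S 0 p) := by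
  refine ⟨⟨[], ?_⟩, ?_, ?_⟩
  · have h := upChain_sort (S := S) [] p 0
    simpa using h
  · intro b hb; omega
  · exact tc_rw (Rw.ridl (n := 0) (s := upChain S 0 p))

/-- Substitution and pre-cooking on terms. -/
lemma graft_Ft (x : ℕ) (t : Tm S) (ht : Tm.WF 0 t) :
    ∀ (u : Tm S) (p : ℕ),
      TmConv S (Ft S p (Tm.subst x t u)) (ETm.graft x (Ft S 0 t) (Ft S p u)) := by
  intro u
  induction u with
  | bvar i =>
      intro p
      have : ETm.graft x (Ft S 0 t) (Ft S p (.bvar i)) = Ft S p (.bvar i) := by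
        simp only [Ft]
        split_ifs <;> simp [ETm.graft, graft_upChain]
      rw [show Tm.subst x t (Tm.bvar i) = Tm.bvar i from rfl, this]
      exact tc_refl _
  | fvar y =>
      intro p
      by_cases hxy : y = x
      · subst hxy
        have e1 : Tm.subst y t (Tm.fvar y) = t := by simp [Tm.subst]
        rw [e1]
        match p with
        | 0 =>
            have : ETm.graft y (Ft S 0 t) (Ft S 0 (.fvar y)) = Ft S 0 t := by
              simp [Ft, ETm.graft]
            rw [this]; exact tc_refl _
        | Nat.succ p' =>
            have : ETm.graft y (Ft S 0 t) (Ft S (p' + 1) (.fvar y))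
                = .sub (Ft S 0 t) (upChain S 0 (p' + 1)) := by
              simp [Ft, ETm.graft, graft_upChain]
            rw [this]
            have h := keyG (p' + 1) t 0 (upChain S 0 (p' + 1)) ht (Good_base (p' + 1))
            exact tc_symm h
      · have e1 : Tm.subst x t (Tm.fvar y) = Tm.fvar y := by simp [Tm.subst, hxy]
        have e2 : ETm.graft x (Ft S 0 t) (Ft S p (.fvar y)) = Ft S p (.fvar y) := by
          simp only [Ft]
          split_ifs <;> simp [ETm.graft, graft_upChain, hxy]
        rw [e1, e2]
        exact tc_refl _
  | app f a ih =>
      intro p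
      show TmConv S (.fa f p (fun i => Ft S (p + (S.far f).get i) (Tm.subst x t (a i))))
          (ETm.graft x (Ft S 0 t) (.fa f p (fun i => Ft S (p + (S.far f).get i) (a i))))
      have e : ETm.graft x (Ft S 0 t) (ETm.fa f p (fun i => Ft S (p + (S.far f).get i) (a i)))
          = .fa f p (fun i => ETm.graft x (Ft S 0 t) (Ft S (p + (S.far f).get i) (a i))) := rfl
      rw [e]
      exact conv_fa (fun i => ih i (p + (S.far f).get i))

end Aux

/-- **Substitution and pre-cooking on propositions** (Proposition `substprop`):
for every term `t` and proposition `A` of `L` and every variable `x`,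
`((t/x)A)' ≡ (t'/x)A'` modulo the congruence generated by `σ`. -/
theorem precooking_subst_prop (S : BSig) (t : Tm S) (A : Fm S) (x : ℕ)
    (ht : Tm.WF 0 t) (hA : Fm.WF 0 A) :
    FConv (Ff S (Fm.subst x t A)) (EFm.graft x (Ft S 0 t) (Ff S A)) := by
  clear hA
  induction A with
  | atom P a => exact FConv.atom (fun i => graft_Ft x t ht (a i) ((S.par P).get i))
  | imp A B ihA ihB => exact FConv.imp ihA ihB
  | conj A B ihA ihB => exact FConv.conj ihA ihB
  | disj A B ihA ihB => exact FConv.disj ihA ihB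
  | bot => exact FConv.bot
  | all A ihA => exact FConv.all ihA
  | ex A ihA => exact FConv.ex ihA
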